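/- There exists a function H : ℝ → ℝ with the following properties: (i) for every p ∈ ℕ there exists ε > 0 such that H is C^p on the interval (−ε, ε); (ii) there is no ε > 0 such that H is C^∞ on (−ε, ε); (iii) for every ε > 0, the restriction of H to ℝ \ (−ε, ε) is piecewise given by finitely many polynomials, i.e. ℝ \ (−ε, ε) can be partitioned into finitely many intervals on each of which H agrees with a polynomial. -/

import Mathlib

open Set Filter Topology

noncomputable def pp (n : ℕ) (u : ℝ) (x : ℝ) : ℝ := max (x - u) 0 ^ n

noncomputable def mm (n : ℕ) (v : ℝ) (x : ℝ) : ℝ := pp n (-v) (-x)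

lemma mm_eq (n : ℕ) (v x : ℝ) : mm n v x = max (v - x) 0 ^ n := by
  simp only [mm, pp]; ring_nf

lemma pp_nonneg (n : ℕ) (u x : ℝ) : 0 ≤ pp n u x :=
  pow_nonneg (le_max_right _ 0) n

lemma mm_nonneg (n : ℕ) (v x : ℝ) : 0 ≤ mm n v x := pp_nonneg _ _ _

lemma pp_of_le {n : ℕ} {u x : ℝ} (hn : 1 ≤ n) (h : x ≤ u) : pp n u x = 0 := by
  have : max (x - u) 0 = 0 := max_eq_right (by linarith)
  simp [pp, this, zero_pow (by omega : n ≠ 0)]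

lemma mm_of_le {n : ℕ} {v x : ℝ} (hn : 1 ≤ n) (h : v ≤ x) : mm n v x = 0 :=
  pp_of_le hn (by linarith)

lemma pp_of_ge {n : ℕ} {u x : ℝ} (h : u ≤ x) : pp n u x = (x - u) ^ n := by
  simp [pp, max_eq_left (by linarith : (0:ℝ) ≤ x - u)]

lemma mm_of_ge {n : ℕ} {v x : ℝ} (h : x ≤ v) : mm n v x = (v - x) ^ n := by
  rw [mm_eq]; simp [max_eq_left (by linarith : (0:ℝ) ≤ v - x)]

lemma hasDerivAt_pp (n : ℕ) (hn : 1 ≤ n) (u x : ℝ) :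
    HasDerivAt (pp (n + 1) u) ((n + 1) * pp n u x) x := by
  rcases lt_trichotomy x u with h | h | h
  · have h0 : HasDerivAt (fun _ : ℝ => (0:ℝ)) 0 x := hasDerivAt_const x 0
    have hv : pp n u x = 0 := pp_of_le hn h.le
    rw [hv, mul_zero]
    refine h0.congr_of_eventuallyEq ?_
    filter_upwards [Iio_mem_nhds h] with y hy
    exact pp_of_le (by omega) (le_of_lt hy)
  · rw [h]
    have hv : pp n u u = 0 := pp_of_le hn le_rfl
    rw [hv, mul_zero]
    rw [hasDerivAt_iff_tendsto_slope]
    have hb : ∀ y : ℝ, |slope (pp (n + 1) u) u y| ≤ |y - u| ^ n := by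
      intro y
      rw [slope_def_field, pp_of_le (by omega : 1 ≤ n + 1) (le_refl u), sub_zero]
      rcases le_or_gt y u with hy | hy
      · rw [pp_of_le (by omega : 1 ≤ n + 1) hy, zero_div, abs_zero]
        positivity
      · rw [pp_of_ge hy.le]
        have hyx : y - u ≠ 0 := by linarith
        have hq : (y - u) ^ (n + 1) / (y - u) = (y - u) ^ n := by
          rw [pow_succ, mul_div_assoc, div_self hyx, mul_one]
        rw [hq, abs_pow]
    have ht : Tendsto (fun y : ℝ => |y - u| ^ n) (𝓝[≠] u) (𝓝 0) := by
      have hc : Tendsto (fun y : ℝ => |y - u| ^ n) (𝓝 u) (𝓝 (|u - u| ^ n)) := by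
        apply Continuous.tendsto; continuity
      simp only [sub_self, abs_zero, zero_pow (by omega : n ≠ 0)] at hc
      exact hc.mono_left nhdsWithin_le_nhds
    exact squeeze_zero_norm hb ht
  · have hp : HasDerivAt (fun y : ℝ => (y - u) ^ (n + 1)) ((n + 1) * (x - u) ^ n) x := by
      simpa using ((hasDerivAt_id x).sub_const u).fun_pow (n + 1)
    have hv : (n + 1 : ℝ) * pp n u x = (n + 1) * (x - u) ^ n := by rw [pp_of_ge h.le]
    rw [hv]
    refine hp.congr_of_eventuallyEq ?_
    filter_upwards [Ioi_mem_nhds h] with y hy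
    exact pp_of_ge (le_of_lt hy)

lemma deriv_pp (n : ℕ) (hn : 1 ≤ n) (u : ℝ) :
    deriv (pp (n + 1) u) = fun x => (n + 1) * pp n u x := by
  funext x; exact (hasDerivAt_pp n hn u x).deriv

lemma continuous_pp (n : ℕ) (u : ℝ) : Continuous (pp n u) := by
  unfold pp; continuity

lemma contDiff_pp : ∀ (k n : ℕ) (u : ℝ), k + 1 ≤ n → ContDiff ℝ k (pp n u) := by
  intro k
  induction k with
  | zero => intro n u _; exact contDiff_zero.mpr (continuous_pp n u)
  | succ k ih =>
    intro n u hn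
    obtain ⟨m, rfl⟩ : ∃ m, n = m + 1 := ⟨n - 1, by omega⟩
    have hm : 1 ≤ m := by omega
    have hcast : ((k + 1 : ℕ) : WithTop ℕ∞) = (k : WithTop ℕ∞) + 1 := by push_cast; ring
    rw [hcast, contDiff_succ_iff_deriv]
    refine ⟨fun x => (hasDerivAt_pp m hm u x).differentiableAt, by simp, ?_⟩
    rw [deriv_pp m hm u]
    exact contDiff_const.mul (ih m u (by omega))

lemma contDiff_mm (k n : ℕ) (v : ℝ) (h : k + 1 ≤ n) : ContDiff ℝ k (mm n v) :=
  (contDiff_pp k n (-v) h).comp contDiff_neg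

lemma iteratedDeriv_cmul {k : ℕ} {f : ℝ → ℝ} (hf : ContDiff ℝ (k:ℕ) f) (c : ℝ) :
    iteratedDeriv k (fun y => c * f y) = fun x => c * iteratedDeriv k f x := by
  funext x
  simp only [← iteratedDerivWithin_univ]
  exact iteratedDerivWithin_const_mul (mem_univ x) uniqueDiffOn_univ c hf.contDiffWithinAt

lemma iteratedDeriv_pp (k n : ℕ) (u : ℝ) (h : k + 1 ≤ n) :
    iteratedDeriv k (pp n u) = fun x => (n.descFactorial k : ℝ) * pp (n - k) u x := by
  induction k generalizing n with
  | zero => simp [iteratedDeriv_zero]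
  | succ k ih =>
    obtain ⟨m, rfl⟩ : ∃ m, n = m + 1 := ⟨n - 1, by omega⟩
    rw [iteratedDeriv_succ', deriv_pp m (by omega) u]
    rw [iteratedDeriv_cmul (contDiff_pp k m u (by omega)) ((m:ℝ) + 1), ih m (by omega)]
    funext x
    rw [Nat.succ_descFactorial_succ, Nat.succ_sub_succ]
    push_cast
    ring

noncomputable def aa (n : ℕ) : ℝ := 1 / n

noncomputable def cc (n : ℕ) : ℝ := if n < 2 then 0 else (1/2) ^ n / (n:ℝ) ^ n

noncomputable def bb (n : ℕ) (x : ℝ) : ℝ := (cc n * pp n (aa (n+1)) x) * mm n (aa (n-1)) x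

noncomputable def HH (x : ℝ) : ℝ := ∑' n, bb n x

lemma aa_pos {n : ℕ} (hn : 1 ≤ n) : 0 < aa n := by
  have : (0:ℝ) < n := by exact_mod_cast hn
  simp [aa]; positivity

lemma aa_lt_aa {m n : ℕ} (hm : 1 ≤ m) (h : m < n) : aa n < aa m := by
  have h1 : (0:ℝ) < m := by exact_mod_cast hm
  have h2 : (m:ℝ) < n := by exact_mod_cast h
  exact one_div_lt_one_div_of_lt h1 h2

lemma aa_le_aa {m n : ℕ} (hm : 1 ≤ m) (h : m ≤ n) : aa n ≤ aa m := by
  rcases eq_or_lt_of_le h with rfl | h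
  · exact le_refl _
  · exact (aa_lt_aa hm h).le

lemma aa_le_one {n : ℕ} (hn : 1 ≤ n) : aa n ≤ 1 := by
  have := aa_le_aa (le_refl 1) hn
  simpa [aa] using this

lemma cc_nonneg (n : ℕ) : 0 ≤ cc n := by
  unfold cc; split
  · exact le_refl _
  · positivity

lemma cc_pos {n : ℕ} (hn : 2 ≤ n) : 0 < cc n := by
  have h0 : (0:ℝ) < n := by exact_mod_cast (by omega : 0 < n)
  unfold cc
  rw [if_neg (by omega)]
  positivity

lemma cc_le (n : ℕ) : cc n ≤ (1/2) ^ n := by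
  unfold cc; split
  · positivity
  · have h1 : (1:ℝ) ≤ (n:ℝ) := by exact_mod_cast (by omega : 1 ≤ n)
    have h2 : (1:ℝ) ≤ (n:ℝ) ^ n := one_le_pow₀ h1
    calc (1/2:ℝ) ^ n / (n:ℝ) ^ n ≤ (1/2) ^ n / 1 := by
          apply div_le_div_of_nonneg_left (by positivity) (by norm_num) h2
      _ = (1/2) ^ n := by ring

lemma bb_nonneg (n : ℕ) (x : ℝ) : 0 ≤ bb n x :=
  mul_nonneg (mul_nonneg (cc_nonneg n) (pp_nonneg _ _ _)) (mm_nonneg _ _ _)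

lemma bb_of_lt2 {n : ℕ} (h : n < 2) (x : ℝ) : bb n x = 0 := by
  rw [bb, cc, if_pos h]; ring

lemma bb_eq_zero_of_le {n : ℕ} {x : ℝ} (h : x ≤ aa (n+1)) : bb n x = 0 := by
  rcases lt_or_ge n 2 with h2 | h2
  · exact bb_of_lt2 h2 x
  · rw [bb, pp_of_le (by omega) h, mul_zero, zero_mul]

lemma bb_eq_zero_of_ge {n : ℕ} {x : ℝ} (h : aa (n-1) ≤ x) : bb n x = 0 := by
  rcases lt_or_ge n 2 with h2 | h2
  · exact bb_of_lt2 h2 x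
  · rw [bb, mm_of_le (by omega) h, mul_zero]

lemma width_pos {n : ℕ} (hn : 2 ≤ n) : aa (n+1) < aa (n-1) :=
  aa_lt_aa (by omega) (by omega)

lemma width_le_one {n : ℕ} (hn : 2 ≤ n) : aa (n-1) - aa (n+1) ≤ 1 := by
  have h1 : aa (n-1) ≤ 1 := aa_le_one (by omega)
  have h2 : 0 < aa (n+1) := aa_pos (by omega)
  linarith

lemma pp_mul_mm_le_one {i j : ℕ} (hi : 1 ≤ i) (hj : 1 ≤ j) {u v x : ℝ}
    (huv : u < v) (hw : v - u ≤ 1) : pp i u x * mm j v x ≤ 1 := by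
  rcases le_or_gt x u with hx | hx
  · rw [pp_of_le hi hx, zero_mul]; norm_num
  rcases le_or_gt v x with hx' | hx'
  · rw [mm_of_le hj hx', mul_zero]; norm_num
  · rw [pp_of_ge hx.le, mm_of_ge hx'.le]
    have h1 : (x - u) ^ i ≤ 1 := pow_le_one₀ (by linarith) (by linarith)
    have h2 : (v - x) ^ j ≤ 1 := pow_le_one₀ (by linarith) (by linarith)
    have h3 : (0:ℝ) ≤ (x - u) ^ i := pow_nonneg (by linarith) i
    nlinarith

lemma bb_le (n : ℕ) (x : ℝ) : bb n x ≤ (1/2) ^ n := by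
  rcases lt_or_ge n 2 with h2 | h2
  · rw [bb_of_lt2 h2]
    positivity
  · have h := pp_mul_mm_le_one (by omega : 1 ≤ n) (by omega : 1 ≤ n)
      (width_pos h2) (width_le_one h2) (x := x)
    have h1 : bb n x = cc n * (pp n (aa (n+1)) x * mm n (aa (n-1)) x) := by rw [bb]; ring
    calc bb n x ≤ cc n * 1 := by
          rw [h1]
          exact mul_le_mul_of_nonneg_left h (cc_nonneg n)
      _ = cc n := mul_one _
      _ ≤ (1/2) ^ n := cc_le n

lemma summable_bb (x : ℝ) : Summable fun n => bb n x :=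
  Summable.of_nonneg_of_le (fun n => bb_nonneg n x) (fun n => bb_le n x)
    (summable_geometric_of_lt_one (by norm_num) (by norm_num))

lemma contDiff_bb {k n : ℕ} (h : k + 1 ≤ n) : ContDiff ℝ (k:ℕ) (bb n) :=
  (contDiff_const.mul (contDiff_pp k n _ h)).mul (contDiff_mm k n _ h)

lemma norm_iteratedFDeriv_cpp (n i : ℕ) (u x : ℝ) (h : i + 1 ≤ n) (c : ℝ) (hc : 0 ≤ c) :
    ‖iteratedFDeriv ℝ i (fun y => c * pp n u y) x‖
      = c * (n.descFactorial i : ℝ) * pp (n - i) u x := by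
  rw [norm_iteratedFDeriv_eq_norm_iteratedDeriv,
    iteratedDeriv_cmul (contDiff_pp i n u h) c, iteratedDeriv_pp i n u h]
  simp only [Real.norm_eq_abs]
  have hnn : 0 ≤ c * (↑(n.descFactorial i) * pp (n - i) u x) :=
    mul_nonneg hc (mul_nonneg (by positivity) (pp_nonneg _ _ _))
  rw [abs_of_nonneg hnn]
  ring

lemma norm_iteratedFDeriv_mm (n j : ℕ) (v x : ℝ) (h : j + 1 ≤ n) :
    ‖iteratedFDeriv ℝ j (mm n v) x‖
      = (n.descFactorial j : ℝ) * mm (n - j) v x := by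
  rw [norm_iteratedFDeriv_eq_norm_iteratedDeriv]
  have h1 : iteratedDeriv j (mm n v) x = (-1:ℝ) ^ j • iteratedDeriv j (pp n (-v)) (-x) :=
    iteratedDeriv_comp_neg j (pp n (-v)) x
  rw [h1, iteratedDeriv_pp j n (-v) h]
  simp only [smul_eq_mul, Real.norm_eq_abs, abs_mul, abs_pow, abs_neg, abs_one, one_pow, one_mul]
  have : pp (n - j) (-v) (-x) = mm (n - j) v x := rfl
  rw [this, abs_of_nonneg (mm_nonneg _ _ _), Nat.abs_cast]

lemma bb_deriv_bound (n k : ℕ) (hn2 : 2 ≤ n) (hk : k + 1 ≤ n) (x : ℝ) :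
    ‖iteratedFDeriv ℝ k (bb n) x‖ ≤ 2 ^ k * (1/2) ^ n := by
  set u := aa (n+1) with hu
  set v := aa (n-1) with hv
  have hf : ContDiff ℝ (k:ℕ) (fun y => cc n * pp n u y) :=
    contDiff_const.mul (contDiff_pp k n u hk)
  have hg : ContDiff ℝ (k:ℕ) (mm n v) := contDiff_mm k n v hk
  have key := norm_iteratedFDeriv_mul_le (𝕜 := ℝ) hf hg x (le_refl ((k:ℕ) : WithTop ℕ∞))
  have hb : bb n = fun y => (fun y => cc n * pp n u y) y * mm n v y := rfl
  rw [hb]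
  refine le_trans key ?_
  have hn1 : (1:ℝ) ≤ (n:ℝ) := by exact_mod_cast (by omega : 1 ≤ n)
  have hterm : ∀ i ∈ Finset.range (k+1),
      (k.choose i : ℝ) * ‖iteratedFDeriv ℝ i (fun y => cc n * pp n u y) x‖
        * ‖iteratedFDeriv ℝ (k - i) (mm n v) x‖
      ≤ (k.choose i : ℝ) * ((1/2) ^ n) := by
    intro i hi
    have hik : i ≤ k := by have := Finset.mem_range.mp hi; omega
    have hi1 : i + 1 ≤ n := by omega
    have hj1 : (k - i) + 1 ≤ n := by omega
    rw [norm_iteratedFDeriv_cpp n i u x hi1 (cc n) (cc_nonneg n),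
      norm_iteratedFDeriv_mm n (k - i) v x hj1]
    have hdesc1 : (n.descFactorial i : ℝ) ≤ (n:ℝ) ^ i := by
      exact_mod_cast Nat.descFactorial_le_pow n i
    have hdesc2 : (n.descFactorial (k - i) : ℝ) ≤ (n:ℝ) ^ (k - i) := by
      exact_mod_cast Nat.descFactorial_le_pow n (k - i)
    have hpm : pp (n - i) u x * mm (n - (k - i)) v x ≤ 1 :=
      pp_mul_mm_le_one (by omega) (by omega) (width_pos hn2) (width_le_one hn2)
    have hppnn : 0 ≤ pp (n - i) u x := pp_nonneg _ _ _
    have hmmnn : 0 ≤ mm (n - (k - i)) v x := mm_nonneg _ _ _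
    have hccnn := cc_nonneg n
    have hstep : cc n * (n.descFactorial i : ℝ) * pp (n - i) u x
        * ((n.descFactorial (k - i) : ℝ) * mm (n - (k - i)) v x)
        ≤ cc n * ((n:ℝ) ^ i * (n:ℝ) ^ (k - i)) := by
      have e1 : cc n * (n.descFactorial i : ℝ) * pp (n - i) u x
          * ((n.descFactorial (k - i) : ℝ) * mm (n - (k - i)) v x)
          = cc n * ((n.descFactorial i : ℝ) * (n.descFactorial (k - i) : ℝ))
            * (pp (n - i) u x * mm (n - (k - i)) v x) := by ring
      rw [e1]
      have hd : ((n.descFactorial i : ℝ) * (n.descFactorial (k - i) : ℝ))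
          ≤ (n:ℝ) ^ i * (n:ℝ) ^ (k - i) := by
        apply mul_le_mul hdesc1 hdesc2 (by positivity) (by positivity)
      calc cc n * ((n.descFactorial i : ℝ) * (n.descFactorial (k-i) : ℝ))
            * (pp (n - i) u x * mm (n - (k - i)) v x)
          ≤ cc n * ((n.descFactorial i : ℝ) * (n.descFactorial (k-i) : ℝ)) * 1 := by
            apply mul_le_mul_of_nonneg_left hpm (by positivity)
        _ = cc n * ((n.descFactorial i : ℝ) * (n.descFactorial (k-i) : ℝ)) := mul_one _
        _ ≤ cc n * ((n:ℝ) ^ i * (n:ℝ) ^ (k - i)) := mul_le_mul_of_nonneg_left hd hccnn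
    have hpow : (n:ℝ) ^ i * (n:ℝ) ^ (k - i) = (n:ℝ) ^ k := by
      rw [← pow_add]; congr 1; omega
    have hccn : cc n * (n:ℝ) ^ k ≤ (1/2) ^ n := by
      have hck : cc n = (1/2) ^ n / (n:ℝ) ^ n := by rw [cc, if_neg (by omega)]
      rw [hck]
      have hnk : (n:ℝ) ^ k ≤ (n:ℝ) ^ n := pow_le_pow_right₀ hn1 (by omega)
      have hnn : (0:ℝ) < (n:ℝ) ^ n := by positivity
      rw [div_mul_eq_mul_div, mul_comm, ← div_mul_eq_mul_div]
      calc (n:ℝ) ^ k / (n:ℝ) ^ n * (1/2) ^ n ≤ 1 * (1/2) ^ n := by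
            apply mul_le_mul_of_nonneg_right _ (by positivity)
            rw [div_le_one hnn]; exact hnk
        _ = (1/2) ^ n := one_mul _
    calc (k.choose i : ℝ) * (cc n * (n.descFactorial i : ℝ) * pp (n - i) u x)
          * ((n.descFactorial (k - i) : ℝ) * mm (n - (k - i)) v x)
        = (k.choose i : ℝ) * (cc n * (n.descFactorial i : ℝ) * pp (n - i) u x
            * ((n.descFactorial (k - i) : ℝ) * mm (n - (k - i)) v x)) := by ring
      _ ≤ (k.choose i : ℝ) * (cc n * ((n:ℝ) ^ i * (n:ℝ) ^ (k - i))) :=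
          mul_le_mul_of_nonneg_left hstep (by positivity)
      _ = (k.choose i : ℝ) * (cc n * (n:ℝ) ^ k) := by rw [hpow]
      _ ≤ (k.choose i : ℝ) * ((1/2) ^ n) :=
          mul_le_mul_of_nonneg_left hccn (by positivity)
  calc ∑ i ∈ Finset.range (k+1), (k.choose i : ℝ)
        * ‖iteratedFDeriv ℝ i (fun y => cc n * pp n u y) x‖
        * ‖iteratedFDeriv ℝ (k - i) (mm n v) x‖
      ≤ ∑ i ∈ Finset.range (k+1), (k.choose i : ℝ) * ((1/2) ^ n) :=
        Finset.sum_le_sum hterm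
    _ = 2 ^ k * (1/2) ^ n := by
        rw [← Finset.sum_mul, ← Nat.cast_sum, Nat.sum_range_choose]
        push_cast; ring

lemma contDiff_tail (p : ℕ) :
    ContDiff ℝ ((p : ℕ∞) : WithTop ℕ∞) (fun x => ∑' n : ℕ, bb (n + (p + 2)) x) := by
  apply contDiff_tsum (v := fun k n => 2 ^ k * (1/2 : ℝ) ^ (n + (p + 2)))
  · intro i
    have h := contDiff_bb (show p + 1 ≤ i + (p + 2) by omega)
    exact_mod_cast h
  · intro k _
    have hs : Summable fun n : ℕ => ((2:ℝ) ^ k * (1/2) ^ (p + 2)) * (1/2) ^ n :=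
      Summable.mul_left _ (summable_geometric_of_lt_one (by norm_num) (by norm_num))
    exact hs.congr fun n => by rw [pow_add]; ring
  · intro k i x hk
    have hkp : k ≤ p := by exact_mod_cast hk
    exact bb_deriv_bound (i + (p + 2)) k (by omega) (by omega) x

lemma part_i (p : ℕ) :
    ContDiffOn ℝ ((p : ℕ∞) : WithTop ℕ∞) HH (Set.Ioo (-aa (p + 2)) (aa (p + 2))) := by
  apply ContDiffOn.congr ((contDiff_tail p).contDiffOn)
  intro x hx
  have hsum := summable_bb x
  have hsplit := hsum.sum_add_tsum_nat_add (p + 2)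
  have hzero : ∑ i ∈ Finset.range (p + 2), bb i x = 0 := by
    apply Finset.sum_eq_zero
    intro i hi
    have hi' : i + 1 ≤ p + 2 := by have := Finset.mem_range.mp hi; omega
    apply bb_eq_zero_of_le
    calc x ≤ aa (p + 2) := (hx.2).le
      _ ≤ aa (i + 1) := aa_le_aa (by omega) hi'
  rw [HH, ← hsplit, hzero, zero_add]

lemma zero_at_of_left {f : ℝ → ℝ} {L a R : ℝ} (hLa : L < a) (haR : a < R)
    (hc : ContinuousOn f (Set.Ioo L R)) (h0 : ∀ x ∈ Set.Ioo L a, f x = 0) : f a = 0 := by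
  have hca : ContinuousAt f a :=
    hc.continuousAt (Ioo_mem_nhds hLa haR)
  have h1 : Tendsto f (𝓝[<] a) (𝓝 (f a)) :=
    (hca.continuousWithinAt).tendsto
  have h2 : Tendsto f (𝓝[<] a) (𝓝 0) := by
    have hev : f =ᶠ[𝓝[<] a] fun _ => 0 := by
      filter_upwards [Ioo_mem_nhdsLT hLa] with y hy
      exact h0 y hy
    exact (tendsto_congr' hev).mpr tendsto_const_nhds
  exact tendsto_nhds_unique h1 h2

lemma littleO_of_left_zero : ∀ (m : ℕ) (f : ℝ → ℝ) (L a R : ℝ), L < a → a < R →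
    ContDiffOn ℝ (m : ℕ) f (Set.Ioo L R) → (∀ x ∈ Set.Ioo L a, f x = 0) →
    ∀ c > (0:ℝ), ∃ δ > (0:ℝ), ∀ x ∈ Set.Ioo a (a + δ), |f x| ≤ c * (x - a) ^ m := by
  intro m
  induction m with
  | zero =>
    intro f L a R hLa haR hf h0 c hc
    have hfa : f a = 0 := zero_at_of_left hLa haR hf.continuousOn h0
    have hca : ContinuousAt f a := hf.continuousOn.continuousAt (Ioo_mem_nhds hLa haR)
    have : ∀ᶠ x in 𝓝 a, |f x - f a| < c := by
      have := Metric.tendsto_nhds.mp hca.tendsto c hc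
      simpa [Real.dist_eq, hfa] using this
    rcases Metric.eventually_nhds_iff.mp this with ⟨δ, hδ, hball⟩
    refine ⟨δ, hδ, fun x hx => ?_⟩
    have hd : dist x a < δ := by
      rw [Real.dist_eq, abs_of_pos (by linarith [hx.1] : (0:ℝ) < x - a)]
      linarith [hx.2]
    have hlt := hball hd
    rw [hfa, sub_zero] at hlt
    simp only [pow_zero, mul_one]
    linarith [hlt]
  | succ m ih =>
    intro f L a R hLa haR hf h0 c hc
    have hf' : ContDiffOn ℝ (m : ℕ) (deriv f) (Set.Ioo L R) := by
      apply hf.deriv_of_isOpen isOpen_Ioo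
      exact_mod_cast le_of_eq (by push_cast; ring)
    have h0' : ∀ x ∈ Set.Ioo L a, deriv f x = 0 := by
      intro x hx
      have hev : f =ᶠ[𝓝 x] fun _ => 0 := by
        filter_upwards [isOpen_Ioo.mem_nhds hx] with y hy
        exact h0 y hy
      rw [hev.deriv_eq, deriv_const]
    obtain ⟨δ₁, hδ₁, hb⟩ := ih (deriv f) L a R hLa haR hf' h0' c hc
    have hfa : f a = 0 := zero_at_of_left hLa haR hf.continuousOn h0
    refine ⟨min δ₁ (R - a), by simp [hδ₁]; linarith, fun x hx => ?_⟩
    obtain ⟨hx1, hx2⟩ := hx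
    have hxR : x < R := by
      have := min_le_right δ₁ (R - a); linarith
    have hxδ₁ : x < a + δ₁ := by
      have := min_le_left δ₁ (R - a); linarith
    have hsub : Set.Icc a x ⊆ Set.Ioo L R := fun y hy =>
      ⟨by linarith [hy.1], by linarith [hy.2]⟩
    have hcont : ContinuousOn f (Set.Icc a x) := hf.continuousOn.mono hsub
    have hderiv : ∀ y ∈ Set.Ioo a x, HasDerivAt f (deriv f y) y := by
      intro y hy
      have hyK : y ∈ Set.Ioo L R := ⟨by linarith [hy.1], by linarith [hy.2]⟩
      have hdiff : DifferentiableAt ℝ f y := by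
        have := (hf.differentiableOn (by simp))
        exact (this y hyK).differentiableAt (isOpen_Ioo.mem_nhds hyK)
      exact hdiff.hasDerivAt
    obtain ⟨ξ, hξ, hsl⟩ := exists_hasDerivAt_eq_slope f (deriv f) hx1 hcont hderiv
    have hxa : x - a > 0 := by linarith
    have hfx : f x = deriv f ξ * (x - a) := by
      rw [hfa] at hsl
      field_simp at hsl
      linarith [hsl]
    have hξb : |deriv f ξ| ≤ c * (ξ - a) ^ m := by
      apply hb ξ
      exact ⟨hξ.1, by linarith [hξ.2]⟩
    have hξx : (ξ - a) ^ m ≤ (x - a) ^ m :=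
      pow_le_pow_left₀ (by linarith [hξ.1]) (by linarith [hξ.2]) m
    calc |f x| = |deriv f ξ| * (x - a) := by
          rw [hfx, abs_mul, abs_of_pos hxa]
      _ ≤ (c * (ξ - a) ^ m) * (x - a) := by
          apply mul_le_mul_of_nonneg_right hξb (by linarith)
      _ ≤ (c * (x - a) ^ m) * (x - a) := by
          apply mul_le_mul_of_nonneg_right _ (by linarith)
          exact mul_le_mul_of_nonneg_left hξx (by linarith)
      _ = c * (x - a) ^ (m + 1) := by ring

lemma HH_eq_on_K {m : ℕ} (hm : 2 ≤ m) :
    ∀ x ∈ Set.Ioo (aa (m+2)) (aa m), bb m x = HH x - bb (m+1) x - bb (m+2) x := by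
  intro x hx
  have hsum : HH x = ∑ n ∈ ({m, m+1, m+2} : Finset ℕ), bb n x := by
    rw [HH]
    apply tsum_eq_sum
    intro q hq
    simp only [Finset.mem_insert, Finset.mem_singleton] at hq
    push_neg at hq
    rcases lt_or_ge q 2 with hq2 | hq2
    · exact bb_of_lt2 hq2 x
    rcases lt_or_ge q m with hqm | hqm
    · apply bb_eq_zero_of_le
      calc x ≤ aa m := hx.2.le
        _ ≤ aa (q+1) := aa_le_aa (by omega) (by omega)
    · have hq3 : m + 3 ≤ q := by omega
      apply bb_eq_zero_of_ge
      calc aa (q-1) ≤ aa (m+2) := aa_le_aa (by omega) (by omega)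
        _ ≤ x := hx.1.le
  have hs : ∑ n ∈ ({m, m+1, m+2} : Finset ℕ), bb n x = bb m x + bb (m+1) x + bb (m+2) x := by
    rw [Finset.sum_insert (by simp), Finset.sum_insert (by simp),
      Finset.sum_singleton]
    ring
  rw [hsum, hs]; ring

lemma part_ii : ¬ ∃ ε > (0:ℝ), ContDiffOn ℝ ((⊤:ℕ∞) : WithTop ℕ∞) HH (Set.Ioo (-ε) ε) := by
  rintro ⟨ε, hε, hsm⟩
  obtain ⟨m₀, hm₀⟩ := exists_nat_gt (1/ε)
  set m := m₀ + 2 with hmdef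
  have hm2 : 2 ≤ m := by omega
  have hmpos : (0:ℝ) < m := by exact_mod_cast (by omega : 0 < m)
  have hε' : aa m < ε := by
    rw [aa, div_lt_iff₀ hmpos]
    have hm₀m : (m₀ : ℝ) < m := by exact_mod_cast (by omega : m₀ < m)
    have h1 : 1/ε < (m:ℝ) := lt_trans hm₀ hm₀m
    calc (1:ℝ) = ε * (1/ε) := by field_simp
      _ < ε * m := by apply mul_lt_mul_of_pos_left h1 hε
  have h1 : aa (m+2) < aa (m+1) := aa_lt_aa (by omega) (by omega)
  have h2 : aa (m+1) < aa m := aa_lt_aa (by omega) (by omega)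
  have h3 : aa m < aa (m-1) := aa_lt_aa (by omega) (by omega)
  have hap : 0 < aa (m+2) := aa_pos (by omega)
  have hK : Set.Ioo (aa (m+2)) (aa m) ⊆ Set.Ioo (-ε) ε := by
    intro x hx
    exact ⟨by linarith [hx.1], by linarith [hx.2]⟩
  have hHsm : ContDiffOn ℝ (m:ℕ) HH (Set.Ioo (aa (m+2)) (aa m)) := by
    apply (hsm.mono hK).of_le
    exact_mod_cast le_top
  have hb1 : ContDiffOn ℝ (m:ℕ) (bb (m+1)) (Set.Ioo (aa (m+2)) (aa m)) := by
    have hsmooth : ContDiff ℝ (m:ℕ)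
        (fun x : ℝ => (cc (m+1) * (x - aa (m+2)) ^ (m+1)) * (aa m - x) ^ (m+1)) := by
      apply ContDiff.mul
      · exact contDiff_const.mul ((contDiff_id.sub contDiff_const).pow (m+1))
      · exact (contDiff_const.sub contDiff_id).pow (m+1)
    apply hsmooth.contDiffOn.congr
    intro x hx
    have e1 : pp (m+1) (aa (m+1+1)) x = (x - aa (m+2)) ^ (m+1) := pp_of_ge hx.1.le
    have e2 : mm (m+1) (aa (m+1-1)) x = (aa m - x) ^ (m+1) := by
      have hmm : m + 1 - 1 = m := rfl
      rw [hmm]; exact mm_of_ge hx.2.le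
    rw [bb, e1, e2]
  have hb2 : ContDiffOn ℝ (m:ℕ) (bb (m+2)) (Set.Ioo (aa (m+2)) (aa m)) :=
    (contDiff_bb (show m+1 ≤ m+2 by omega)).contDiffOn
  have hfK : ContDiffOn ℝ (m:ℕ) (bb m) (Set.Ioo (aa (m+2)) (aa m)) := by
    apply ContDiffOn.congr ((hHsm.sub hb1).sub hb2)
    intro x hx
    exact HH_eq_on_K hm2 x hx
  have h0 : ∀ x ∈ Set.Ioo (aa (m+2)) (aa (m+1)), bb m x = 0 := fun x hx =>
    bb_eq_zero_of_le hx.2.le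
  set d := aa (m-1) - aa m with hd
  have hdpos : 0 < d := by rw [hd]; linarith
  have hccm := cc_pos hm2
  have hcpos : (0:ℝ) < cc m * d ^ m / 2 := by positivity
  obtain ⟨δ, hδ, hOb⟩ := littleO_of_left_zero m (bb m) (aa (m+2)) (aa (m+1)) (aa m)
    h1 h2 hfK h0 _ hcpos
  set x₀ := aa (m+1) + min δ (aa m - aa (m+1)) / 2 with hx₀
  have hmin : 0 < min δ (aa m - aa (m+1)) := lt_min hδ (by linarith)
  have hminl := min_le_left δ (aa m - aa (m+1))
  have hminr := min_le_right δ (aa m - aa (m+1))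
  have hx₀1 : aa (m+1) < x₀ := by rw [hx₀]; linarith
  have hx₀2 : x₀ < aa (m+1) + δ := by rw [hx₀]; linarith
  have hx₀3 : x₀ < aa m := by rw [hx₀]; linarith
  have hval : bb m x₀ = cc m * ((x₀ - aa (m+1)) ^ m * (aa (m-1) - x₀) ^ m) := by
    rw [bb, pp_of_ge hx₀1.le, mm_of_ge (by linarith : x₀ ≤ aa (m-1))]
    ring
  have hX : (0:ℝ) < (x₀ - aa (m+1)) ^ m := pow_pos (by linarith) m
  have hDle : d ^ m ≤ (aa (m-1) - x₀) ^ m := pow_le_pow_left₀ hdpos.le (by rw [hd]; linarith) m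
  have hlow : cc m * ((x₀ - aa (m+1)) ^ m * d ^ m) ≤ bb m x₀ := by
    rw [hval]
    apply mul_le_mul_of_nonneg_left _ hccm.le
    exact mul_le_mul_of_nonneg_left hDle hX.le
  have hupp := hOb x₀ ⟨hx₀1, hx₀2⟩
  rw [abs_of_nonneg (bb_nonneg m x₀)] at hupp
  nlinarith [pow_pos hdpos m]

open Polynomial in
noncomputable def qq (m : ℕ) : Polynomial ℝ :=
  Polynomial.C (cc m) * (Polynomial.X - Polynomial.C (aa (m+1))) ^ m
      * (Polynomial.C (aa (m-1)) - Polynomial.X) ^ m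
    + Polynomial.C (cc (m+1)) * (Polynomial.X - Polynomial.C (aa (m+2))) ^ (m+1)
      * (Polynomial.C (aa m) - Polynomial.X) ^ (m+1)

lemma qq_eval (m : ℕ) (x : ℝ) :
    (qq m).eval x = cc m * (x - aa (m+1)) ^ m * (aa (m-1) - x) ^ m
      + cc (m+1) * (x - aa (m+2)) ^ (m+1) * (aa m - x) ^ (m+1) := by
  simp [qq]

lemma HH_zero_of_nonpos {x : ℝ} (hx : x ≤ 0) : HH x = 0 := by
  rw [HH]
  have h : ∀ n, bb n x = 0 := by
    intro n
    rcases lt_or_ge n 2 with h2 | h2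
    · exact bb_of_lt2 h2 x
    · exact bb_eq_zero_of_le (le_trans hx (aa_pos (by omega : 1 ≤ n+1)).le)
  rw [tsum_congr h, tsum_zero]

lemma HH_zero_of_ge_one {x : ℝ} (hx : 1 ≤ x) : HH x = 0 := by
  rw [HH]
  have h : ∀ n, bb n x = 0 := by
    intro n
    rcases lt_or_ge n 2 with h2 | h2
    · exact bb_of_lt2 h2 x
    · apply bb_eq_zero_of_ge
      calc aa (n-1) ≤ aa 1 := aa_le_aa (le_refl 1) (by omega)
        _ = 1 := by simp [aa]
        _ ≤ x := hx
  rw [tsum_congr h, tsum_zero]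

lemma HH_eq_qq {m : ℕ} (hm : 1 ≤ m) {x : ℝ} (hx1 : aa (m+1) ≤ x) (hx2 : x < aa m) :
    HH x = (qq m).eval x := by
  have hsum : HH x = ∑ n ∈ ({m, m+1} : Finset ℕ), bb n x := by
    rw [HH]
    apply tsum_eq_sum
    intro q hq
    simp only [Finset.mem_insert, Finset.mem_singleton] at hq
    push_neg at hq
    rcases lt_or_ge q 2 with hq2 | hq2
    · exact bb_of_lt2 hq2 x
    rcases lt_or_ge q m with hqm | hqm
    · exact bb_eq_zero_of_le (le_trans hx2.le (aa_le_aa (by omega) (by omega)))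
    · have : m + 2 ≤ q := by omega
      exact bb_eq_zero_of_ge (le_trans (aa_le_aa (by omega) (by omega : m + 1 ≤ q - 1)) hx1)
  have hbm : bb m x = cc m * (x - aa (m+1)) ^ m * (aa (m-1) - x) ^ m := by
    rcases eq_or_lt_of_le hm with h1 | h1
    · rw [bb_of_lt2 (by omega) x, show cc m = 0 from by rw [cc, if_pos (by omega)], zero_mul,
        zero_mul]
    · have hm2 : 2 ≤ m := h1
      have hxm1 : x ≤ aa (m-1) := le_of_lt (lt_trans hx2 (aa_lt_aa (by omega) (by omega)))
      rw [bb, pp_of_ge hx1, mm_of_ge hxm1]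
  have hbm1 : bb (m+1) x = cc (m+1) * (x - aa (m+2)) ^ (m+1) * (aa m - x) ^ (m+1) := by
    have hx1' : aa (m+1+1) ≤ x := le_trans (aa_lt_aa (by omega) (by omega)).le hx1
    have hx2' : x ≤ aa (m+1-1) := by
      have : m + 1 - 1 = m := rfl
      rw [this]; exact hx2.le
    rw [bb, pp_of_ge hx1', mm_of_ge hx2']
    norm_num
  rw [hsum, Finset.sum_insert (by simp), Finset.sum_singleton, hbm, hbm1, qq_eval]

lemma exists_aa_lt {ε : ℝ} (hε : 0 < ε) : ∃ N : ℕ, 2 ≤ N ∧ aa N < ε := by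
  obtain ⟨m₀, hm₀⟩ := exists_nat_gt (1/ε)
  refine ⟨m₀ + 2, by omega, ?_⟩
  have hmpos : (0:ℝ) < (m₀ + 2 : ℕ) := by exact_mod_cast (by omega : 0 < m₀ + 2)
  rw [aa, div_lt_iff₀ hmpos]
  have hm₀m : (m₀ : ℝ) < ((m₀ + 2 : ℕ) : ℝ) := by exact_mod_cast (by omega : m₀ < m₀ + 2)
  have h1 : 1/ε < ((m₀ + 2 : ℕ) : ℝ) := lt_trans hm₀ hm₀m
  calc (1:ℝ) = ε * (1/ε) := by field_simp
    _ < ε * ((m₀ + 2 : ℕ) : ℝ) := by exact mul_lt_mul_of_pos_left h1 hε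

lemma part_iii : ∀ ε > (0:ℝ), ∃ (k : ℕ) (I : Fin k → Set ℝ) (P : Fin k → Polynomial ℝ),
    (∀ i, (I i).OrdConnected) ∧
    (∀ i j, i ≠ j → Disjoint (I i) (I j)) ∧
    (⋃ i, I i) = (Set.Ioo (-ε) ε)ᶜ ∧
    ∀ i, ∀ x ∈ I i, HH x = (P i).eval x := by
  intro ε hε
  classical
  obtain ⟨N, hN2, haN⟩ := exists_aa_lt hε
  set t : ℕ → ℝ := fun j => max ε (aa j) with ht
  have ht_ge : ∀ j, ε ≤ t j := fun j => le_max_left _ _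
  have ht_anti : ∀ i j : ℕ, 1 ≤ i → i ≤ j → t j ≤ t i := fun i j h1 hij =>
    max_le_max (le_refl ε) (aa_le_aa h1 hij)
  have htN : t N = ε := max_eq_left haN.le
  refine ⟨N + 1,
    fun i => if i.val = 0 then Set.Iic (-ε) else if i.val = N then Set.Ici (t 1)
      else Set.Ico (t (i.val + 1)) (t i.val),
    fun i => if i.val = 0 ∨ i.val = N then 0 else qq i.val, ?_, ?_, ?_, ?_⟩
  · intro i
    dsimp only
    split_ifs
    · exact Set.ordConnected_Iic
    · exact Set.ordConnected_Ici
    · exact Set.ordConnected_Ico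
  · intro i j hne
    rw [Set.disjoint_left]
    intro x hxi hxj
    have hvne : i.val ≠ j.val := fun h => hne (Fin.ext h)
    simp only at hxi hxj
    split_ifs at hxi hxj with h1 h2 h3 h4 h5 h6 h7 h8 h9
    all_goals first
      | (exact hvne (by omega))
      | skip
    -- remaining cases: derive numeric contradictions
    all_goals simp only [Set.mem_Iic, Set.mem_Ici, Set.mem_Ico] at hxi hxj
    -- i = 0, j = N
    · have := ht_ge 1; linarith [hxj, hxi]
    -- i = 0, j mid
    · have := ht_ge (j.val + 1); linarith [hxj.1, hxi]
    -- i = N, j = 0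
    · have := ht_ge 1; linarith [hxi, hxj]
    -- i = N, j mid
    · have hj1 : 1 ≤ j.val := by omega
      have := ht_anti 1 j.val (le_refl 1) hj1
      linarith [hxi, hxj.2, ht_anti j.val j.val hj1 (le_refl _)]
    -- i mid, j = 0
    · have := ht_ge (i.val + 1); linarith [hxi.1, hxj]
    -- i mid, j = N
    · have hi1 : 1 ≤ i.val := by omega
      have := ht_anti 1 i.val (le_refl 1) hi1
      linarith [hxj, hxi.2]
    -- i mid, j mid
    · rcases lt_or_gt_of_ne hvne with hlt | hgt
      · have : t j.val ≤ t (i.val + 1) := ht_anti (i.val + 1) j.val (by omega) (by omega)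
        linarith [hxi.1, hxj.2]
      · have : t i.val ≤ t (j.val + 1) := ht_anti (j.val + 1) i.val (by omega) (by omega)
        linarith [hxj.1, hxi.2]
  · ext x
    simp only [Set.mem_iUnion, Set.mem_compl_iff, Set.mem_Ioo, not_and, not_lt]
    constructor
    · rintro ⟨i, hi⟩
      split_ifs at hi with h1 h2
      · rw [Set.mem_Iic] at hi
        intro hax; linarith
      · rw [Set.mem_Ici] at hi
        intro _; linarith [ht_ge 1]
      · rw [Set.mem_Ico] at hi
        intro _; linarith [ht_ge (i.val + 1), hi.1]
    · intro hx
      rcases le_or_gt x (-ε) with hle | hgt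
      · refine ⟨⟨0, by omega⟩, ?_⟩
        simpa using hle
      · have hεx : ε ≤ x := hx hgt
        rcases le_or_gt (t 1) x with hti | hti
        · refine ⟨⟨N, by omega⟩, ?_⟩
          have hN0 : N ≠ 0 := by omega
          simpa [hN0] using hti
        · set m := Nat.findGreatest (fun j => x < t j) N with hmdef
          have hm1 : 1 ≤ m := Nat.le_findGreatest (by omega) hti
          have hmN : m ≤ N := Nat.findGreatest_le N
          have hPm : x < t m := Nat.findGreatest_spec (P := fun j => x < t j) (m := 1) (n := N) (by omega) hti
          have hmne : m ≠ N := by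
            intro h
            rw [h, htN] at hPm
            linarith
          have hnext : t (m + 1) ≤ x := by
            have := Nat.findGreatest_is_greatest (P := fun j => x < t j)
              (Nat.lt_succ_self m) (by omega)
            exact le_of_not_gt this
          refine ⟨⟨m, by omega⟩, ?_⟩
          simp only
          rw [if_neg (by omega), if_neg (by simpa using hmne)]
          exact Set.mem_Ico.mpr ⟨hnext, hPm⟩
  · intro i x hx
    simp only at hx ⊢
    split_ifs at hx with h1 h2
    · rw [if_pos (Or.inl h1), Polynomial.eval_zero]
      rw [Set.mem_Iic] at hx
      exact HH_zero_of_nonpos (by linarith)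
    · rw [if_pos (Or.inr h2), Polynomial.eval_zero]
      rw [Set.mem_Ici] at hx
      apply HH_zero_of_ge_one
      calc (1:ℝ) = aa 1 := by simp [aa]
        _ ≤ t 1 := le_max_right _ _
        _ ≤ x := hx
    · rw [Set.mem_Ico] at hx
      have hi1 : 1 ≤ i.val := by omega
      have hx1 : aa (i.val + 1) ≤ x := le_trans (le_max_right _ _) hx.1
      have hεx : ε ≤ x := le_trans (le_max_left _ _) hx.1
      have hx2 : x < aa i.val := by
        rcases lt_max_iff.mp hx.2 with h | h
        · linarith
        · exact h
      rw [if_neg (by push_neg; exact ⟨by omega, by omega⟩)]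
      exact HH_eq_qq hi1 hx1 hx2

/-- There is a function `H : ℝ → ℝ` whose germ at `0` is weakly C^∞ (it is `C^p`
on a neighborhood of `0` for every `p`) but not C^∞ (it is C^∞ on no neighborhood
of `0`), and whose restriction to the complement of any neighborhood of `0` is
piecewise given by finitely many polynomials. -/
theorem exists_weaklyCinfty_not_Cinfty_piecewise_poly :
    ∃ H : ℝ → ℝ,
      (∀ p : ℕ, ∃ ε > (0 : ℝ), ContDiffOn ℝ p H (Set.Ioo (-ε) ε)) ∧
      (¬ ∃ ε > (0 : ℝ), ContDiffOn ℝ (⊤ : ℕ∞) H (Set.Ioo (-ε) ε)) ∧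
      (∀ ε > (0 : ℝ), ∃ (k : ℕ) (I : Fin k → Set ℝ) (P : Fin k → Polynomial ℝ),
        (∀ i, (I i).OrdConnected) ∧
        (∀ i j, i ≠ j → Disjoint (I i) (I j)) ∧
        (⋃ i, I i) = (Set.Ioo (-ε) ε)ᶜ ∧
        ∀ i, ∀ x ∈ I i, H x = (P i).eval x) := by
  refine ⟨HH, ?_, ?_, part_iii⟩
  · intro p
    refine ⟨aa (p + 2), aa_pos (by omega), ?_⟩
    exact_mod_cast part_i p
  · exact_mod_cast part_ii
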